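/- arXiv:2209.12306 — 2 statements merged into one kernel-verified Lean document; each statement's English description precedes it below -/
import Mathlib

section
/- In the group Dih_∞ × ℤ/2 with elements γ_{k,l,m} = u^k v₁^l v₂^m (k ∈ ℤ, l,m ∈ {0,1}), the square γ_{k,l,m}² equals u^{2k} if l = 0 and equals the identity if l = 1; the set of finite-order elements, up to conjugacy, is represented by {e, v₁, v₂, v₁v₂, uv₁, uv₁v₂}, a set of exactly six conjugacy classes. -/
open DihedralGroup

/-- The group `Dih_∞ × ℤ/2`, i.e. the frieze group `p2mm`. -/
abbrev P2mm := DihedralGroup 0 × Multiplicative (ZMod 2)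

/-- The element `γ_{k,l,m} = u^k v₁^l v₂^m` of `Dih_∞ × ℤ/2`, with `u = (r 1, 1)`,
`v₁ = (sr 0, 1)` and `v₂ = (1, ofAdd 1)`. -/
def gammaP (k : ℤ) (l : ℕ) (m : ZMod 2) : P2mm :=
  (r (k : ZMod 0) * (sr 0) ^ l, Multiplicative.ofAdd m)

/-- The six representatives `{e, v₁, v₂, v₁v₂, uv₁, uv₁v₂}`. -/
def repsP : Set P2mm :=
  {gammaP 0 0 0, gammaP 0 1 0, gammaP 0 0 1, gammaP 0 1 1, gammaP 1 1 0, gammaP 1 1 1}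

lemma inv_r' (j : ZMod 0) : (r j : DihedralGroup 0)⁻¹ = r (-j) := rfl

lemma gammaP_zero (k : ℤ) (m : ZMod 2) :
    gammaP k 0 m = (r (k : ZMod 0), Multiplicative.ofAdd m) := by
  simp [gammaP]

lemma gammaP_one (k : ℤ) (m : ZMod 2) :
    gammaP k 1 m = (sr (-(k : ZMod 0)), Multiplicative.ofAdd m) := by
  simp [gammaP]
  exact congrArg sr (zero_sub (k : ℤ))

lemma r_pow' (i : ZMod 0) (n : ℕ) : (r i : DihedralGroup 0) ^ n = r ((n : ZMod 0) * i) := by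
  induction n with
  | zero => simp
  | succ n ih => rw [pow_succ, ih, r_mul_r]; push_cast; ring_nf

lemma r_fin (i : ZMod 0) (h : IsOfFinOrder (r i : DihedralGroup 0)) : i = 0 := by
  haveI : NoZeroDivisors (ZMod 0) := inferInstanceAs (NoZeroDivisors ℤ)
  obtain ⟨n, hn, hpow⟩ := h.exists_pow_eq_one
  rw [r_pow', one_def, r.injEq] at hpow
  rcases mul_eq_zero.mp hpow with h | h
  · exact absurd (Nat.cast_eq_zero.mp h) hn.ne'
  · exact h

lemma castZ_add (a b : ℤ) : ((a + b : ℤ) : ZMod 2) = (a : ZMod 2) + (b : ZMod 2) := by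
  push_cast; ring

lemma castZ_sub (a b : ℤ) : ((b - a : ℤ) : ZMod 2) = (a : ZMod 2) + (b : ZMod 2) := by
  rw [Int.cast_sub, CharTwo.sub_eq_add, add_comm]

/-- The sign-and-index-parity invariant of `Dih_∞`, a hom to an abelian group. -/
def psiD : DihedralGroup 0 →* Multiplicative (ZMod 2 × ZMod 2) where
  toFun d := Multiplicative.ofAdd <| match d with
    | r i => (0, (Int.cast i : ZMod 2))
    | sr i => (1, (Int.cast i : ZMod 2))
  map_one' := by decide
  map_mul' a b := by
    rcases a with i | i <;> rcases b with j | j <;>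
      simp only [r_mul_r, r_mul_sr, sr_mul_r, sr_mul_sr, ← ofAdd_add, Prod.mk_add_mk] <;>
      refine congrArg Multiplicative.ofAdd (Prod.ext ?_ ?_)
    · rfl
    · exact castZ_add i j
    · rfl
    · exact castZ_sub i j
    · rfl
    · exact castZ_add i j
    · show (0 : ZMod 2) = 1 + 1; decide
    · exact castZ_sub i j

/-- The combined conjugation invariant on `P2mm`, valued in an abelian group. -/
def PhiP : P2mm →* Multiplicative (ZMod 2 × ZMod 2) × Multiplicative (ZMod 2) :=
  MonoidHom.prodMap psiD (MonoidHom.id _)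

/-- In `Dih_∞ × ℤ/2`, the square of `γ_{k,l,m}` equals `u^{2k}` if `l = 0` and the
identity if `l = 1`; the finite-order elements are, up to conjugacy, represented
by `{e, v₁, v₂, v₁v₂, uv₁, uv₁v₂}`, a set of exactly six conjugacy classes. -/
theorem p2mm_squares_and_conjugacy_classes :
    (∀ (k : ℤ) (m : ZMod 2), (gammaP k 0 m) ^ 2 = gammaP (2 * k) 0 0) ∧
    (∀ (k : ℤ) (m : ZMod 2), (gammaP k 1 m) ^ 2 = 1) ∧
    (∀ x : P2mm, IsOfFinOrder x → ∃ y ∈ repsP, IsConj y x) ∧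
    (∀ y ∈ repsP, ∀ z ∈ repsP, IsConj y z → y = z) ∧
    repsP.ncard = 6 := by
  have hm2 : ∀ m : ZMod 2, m = 0 ∨ m = 1 := by decide
  have haddself : ∀ m : ZMod 2, m + m = 0 := by decide
  refine ⟨?_, ?_, ?_, ?_, ?_⟩
  · intro k m
    rw [gammaP_zero, gammaP_zero]
    rw [sq, Prod.mk_mul_mk, ← ofAdd_add, haddself]
    exact Prod.ext (congrArg r (two_mul k).symm) rfl
  · intro k m
    rw [gammaP_one]
    rw [sq, Prod.mk_mul_mk, ← ofAdd_add, haddself]; refine Prod.ext (congrArg r (sub_self (-k))) ?_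
    rfl
  · rintro ⟨d, z⟩ hx
    rcases d with i | i
    · have hi : i = 0 := r_fin i ((MonoidHom.fst _ _).isOfFinOrder hx)
      refine ⟨gammaP 0 0 z.toAdd, ?_, ?_⟩
      · rcases hm2 z.toAdd with h | h <;> rw [h] <;> simp [repsP]
      · have h : gammaP 0 0 z.toAdd = (r i, z) := by
          rw [gammaP_zero, hi, Prod.mk.injEq]
          exact ⟨rfl, rfl⟩
        rw [h]
    · rcases Int.even_or_odd (i : ℤ) with heven | hodd
      · refine ⟨gammaP 0 1 z.toAdd, ?_, ?_⟩
        · rcases hm2 z.toAdd with h | h <;> rw [h] <;> simp [repsP]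
        · obtain ⟨j, hj⟩ := heven
          rw [gammaP_one, isConj_iff]
          refine ⟨(r (-j), 1), ?_⟩
          refine Prod.ext ?_ (by simp)
          subst hj
          exact congrArg sr (by ring : ((-0 - -j) + - -j : ℤ) = j + j)
      · refine ⟨gammaP 1 1 z.toAdd, ?_, ?_⟩
        · rcases hm2 z.toAdd with h | h <;> rw [h] <;> simp [repsP]
        · obtain ⟨j, hj⟩ := hodd
          rw [gammaP_one, isConj_iff]
          refine ⟨(r ((-(j + 1) : ℤ) : ZMod 0), 1), ?_⟩
          refine Prod.ext ?_ (by simp)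
          subst hj
          exact congrArg sr (by ring : ((-1 - -(j + 1)) + - -(j + 1) : ℤ) = 2 * j + 1)
  · intro y hy z hz hconj
    have hPhi : PhiP y = PhiP z := isConj_iff_eq.mp (PhiP.map_isConj hconj)
    simp only [repsP, Set.mem_insert_iff, Set.mem_singleton_iff] at hy hz
    rcases hy with rfl | rfl | rfl | rfl | rfl | rfl <;>
      rcases hz with rfl | rfl | rfl | rfl | rfl | rfl <;>
      first
        | rfl
        | (exfalso
           rw [gammaP_zero, gammaP_one] at hPhi
           revert hPhi
           simp [PhiP, psiD, Prod.ext_iff] <;> decide)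
        | (exfalso
           rw [gammaP_zero, gammaP_zero] at hPhi
           revert hPhi
           simp [PhiP, psiD, Prod.ext_iff] <;> decide)
        | (exfalso
           rw [gammaP_one, gammaP_zero] at hPhi
           revert hPhi
           simp [PhiP, psiD, Prod.ext_iff] <;> decide)
        | (exfalso
           rw [gammaP_one, gammaP_one] at hPhi
           revert hPhi
           simp [PhiP, psiD, Prod.ext_iff] <;> decide)
  · have h1 : ((1 : ℤ) : ZMod 0) = 1 := by norm_num
    have h0 : ((0 : ℤ) : ZMod 0) = 0 := by norm_num
    have hne : (1 : ZMod 0) ≠ 0 := one_ne_zero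
    rw [repsP]
    rw [Set.ncard_insert_of_notMem (by
      simp [gammaP_zero, gammaP_one, Prod.ext_iff, h0, h1, hne] <;> decide)]
    rw [Set.ncard_insert_of_notMem (by
      simp [gammaP_zero, gammaP_one, Prod.ext_iff, h0, h1, hne] <;> decide)]
    rw [Set.ncard_insert_of_notMem (by
      simp [gammaP_zero, gammaP_one, Prod.ext_iff, h0, h1, hne] <;> decide)]
    rw [Set.ncard_insert_of_notMem (by
      simp [gammaP_zero, gammaP_one, Prod.ext_iff, h0, h1, hne] <;> decide)]
    rw [Set.ncard_insert_of_notMem (by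
      simp [gammaP_zero, gammaP_one, Prod.ext_iff, h0, h1, hne] <;> decide)]
    rw [Set.ncard_singleton]
end

section
/- In the group Dih_∞ × ℤ/2 (frieze group p2mm), the centralizer of v₁ v₂^m (m ∈ {0,1}) is the Klein four-group {e, v₁, v₂, v₁v₂}, and the centralizer of u v₁ v₂^m is {e, uv₁, v₂, uv₁v₂}. -/
open DihedralGroup

private lemma p2mm_aux1 (i : ℤ) : -i = i ↔ i = 0 := by omega
private lemma p2mm_aux2 (i : ℤ) : -1 - i = -1 + i ↔ i = 0 := by omega
private lemma p2mm_aux3 (i : ℤ) : -1 - i = i + 1 ↔ i = -1 := by omega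

private lemma p2mm_aux5 (k : ℤ) : @r 0 k = r (Int.cast k : ZMod 0) := rfl

private lemma p2mm_aux6 : @Multiplicative.ofAdd (ZMod 2) (0 : Fin (1 + 1)) = 1 := rfl

private lemma p2mm_aux7 :
    @Multiplicative.ofAdd (ZMod 2) (1 : Fin (1 + 1)) = Multiplicative.ofAdd (1 : ZMod 2) := rfl

private lemma p2mm_aux4 : (1 : Multiplicative (ZMod 2)) ≠ Multiplicative.ofAdd 1 := by
  decide

/-- In `Dih_∞ × ℤ/2` (frieze group `p2mm`), the centralizer of `v₁ v₂^m` is the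
Klein four-group `{e, v₁, v₂, v₁v₂}`, and the centralizer of `u v₁ v₂^m` is
`{e, uv₁, v₂, uv₁v₂}`. -/
theorem p2mm_centralizers (m : ZMod 2) :
    ((Subgroup.centralizer {gammaP 0 1 m} : Subgroup P2mm) : Set P2mm) =
      {gammaP 0 0 0, gammaP 0 1 0, gammaP 0 0 1, gammaP 0 1 1} ∧
    ((Subgroup.centralizer {gammaP 1 1 m} : Subgroup P2mm) : Set P2mm) =
      {gammaP 0 0 0, gammaP 1 1 0, gammaP 0 0 1, gammaP 1 1 1} := by
  constructor <;> ext ⟨d, z⟩ <;> rcases d with i | i <;>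
    fin_cases z <;>
    simp [gammaP, SetLike.mem_coe, Subgroup.mem_centralizer_singleton_iff, Prod.ext_iff,
      Prod.mul_def, r_mul_sr, sr_mul_r, sr_mul_sr, r_mul_r, DihedralGroup.one_def,
      mul_comm, p2mm_aux4, p2mm_aux5, p2mm_aux6, p2mm_aux7, -r_zero] <;>
    first
      | exact p2mm_aux1 i
      | exact p2mm_aux2 i
      | exact p2mm_aux3 i
end
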